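/- Let q ≥ 1 be an integer, C ≥ 0 and M ≥ 0 real numbers, and f : ℝ → ℝ a three times continuously differentiable function such that f(θ + 1) = f(θ) + 1 for all θ ∈ ℝ, |f′′′(θ)| ≤ M for all θ ∈ ℝ, and |f((k+1)/q) − f(k/q) − 1/q| ≤ C/q³ for every integer k. Then |f′(θ) − 1| ≤ (C + M)/q² for every θ ∈ ℝ. -/

import Mathlib

/-- Analytic core of Lemma 5.5: a `C³` lift of a circle map whose values on the grid
`k/q` are `C/q³`-close to a rigid rotation by `1/q`, and whose third derivative is
bounded by `M`, has derivative `(C+M)/q²`-close to `1` everywhere. -/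
theorem stmt12 (q : ℕ) (hq : 1 ≤ q) (C M : ℝ) (hC : 0 ≤ C) (hM : 0 ≤ M)
    (f : ℝ → ℝ) (hf : ContDiff ℝ 3 f)
    (hlift : ∀ θ : ℝ, f (θ + 1) = f θ + 1)
    (hM3 : ∀ θ : ℝ, |iteratedDeriv 3 f θ| ≤ M)
    (hgrid : ∀ k : ℤ, |f (((k : ℝ) + 1) / q) - f ((k : ℝ) / q) - 1 / q| ≤ C / q ^ 3) :
    ∀ θ : ℝ, |deriv f θ - 1| ≤ (C + M) / q ^ 2 := by
  have hq0 : (0 : ℝ) < q := by exact_mod_cast hq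
  have hf1 : Differentiable ℝ f := hf.differentiable (by norm_num)
  have hd1 : ContDiff ℝ 2 (deriv f) := (contDiff_succ_iff_deriv.mp hf).2.2
  have hd2 : ContDiff ℝ 1 (deriv (deriv f)) := (contDiff_succ_iff_deriv.mp hd1).2.2
  have hd1diff : Differentiable ℝ (deriv f) := hd1.differentiable (by norm_num)
  have hd2diff : Differentiable ℝ (deriv (deriv f)) := hd2.differentiable (by norm_num)
  have hcont : Continuous (deriv f) := hd1.continuous
  have hiter : iteratedDeriv 3 f = deriv (deriv (deriv f)) := by
    rw [show (3:ℕ) = 2 + 1 from rfl, iteratedDeriv_succ, show (2:ℕ) = 1 + 1 from rfl,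
      iteratedDeriv_succ, iteratedDeriv_one]
  have hM3' : ∀ θ : ℝ, |deriv (deriv (deriv f)) θ| ≤ M := by
    intro θ; rw [← hiter]; exact hM3 θ
  -- periodicity of the derivative
  have hpd : Function.Periodic (deriv f) 1 := by
    intro θ
    have h1 : (fun t => f (t + 1)) = fun t => f t + 1 := funext hlift
    have h2 : deriv (fun t => f (t + 1)) θ = deriv f (θ + 1) := deriv_comp_add_const f 1 θ
    rw [h1] at h2
    rw [← h2]
    simp
  -- key estimate at a critical point of `deriv f`
  have key : ∀ θ₀ : ℝ, deriv (deriv f) θ₀ = 0 → |deriv f θ₀ - 1| ≤ (C + M) / q ^ 2 := by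
    intro θ₀ hcrit
    set k : ℤ := ⌊θ₀ * q⌋ with hk
    set a : ℝ := (k : ℝ) / q with hadef
    set b : ℝ := ((k : ℝ) + 1) / q with hbdef
    have ha : a ≤ θ₀ := by
      rw [hadef, div_le_iff₀ hq0]
      exact Int.floor_le (θ₀ * q)
    have hb : θ₀ ≤ b := by
      rw [hbdef, le_div_iff₀ hq0]
      exact (Int.lt_floor_add_one (θ₀ * q)).le
    have hba : b - a = 1 / q := by
      rw [hadef, hbdef]; field_simp; ring
    have haleb : a ≤ b := le_trans ha hb
    have hθ₀S : θ₀ ∈ Set.Icc a b := ⟨ha, hb⟩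
    have hdist : ∀ s ∈ Set.Icc a b, |s - θ₀| ≤ 1 / q := by
      intro s hs
      rw [abs_le]
      constructor <;> [linarith [hs.1, hb, hba]; linarith [hs.2, ha, hba]]
    -- second derivative bound on the interval
    have d2bound : ∀ s ∈ Set.Icc a b, |deriv (deriv f) s| ≤ M * (1 / q) := by
      intro s hs
      have hmvt := (convex_Icc a b).norm_image_sub_le_of_norm_deriv_le
        (f := deriv (deriv f)) (fun x _ => hd2diff x)
        (fun x _ => by simpa [Real.norm_eq_abs] using hM3' x) hθ₀S hs
      rw [hcrit, sub_zero] at hmvt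
      simp only [Real.norm_eq_abs] at hmvt
      calc |deriv (deriv f) s| ≤ M * |s - θ₀| := hmvt
        _ ≤ M * (1 / q) := mul_le_mul_of_nonneg_left (hdist s hs) hM
    -- first derivative variation bound on the interval
    have d1bound : ∀ s ∈ Set.Icc a b, |deriv f s - deriv f θ₀| ≤ M * (1 / q) * (1 / q) := by
      intro s hs
      have hmvt := (convex_Icc a b).norm_image_sub_le_of_norm_deriv_le
        (f := deriv f) (fun x _ => hd1diff x)
        (fun x hx => by simpa [Real.norm_eq_abs] using d2bound x hx) hθ₀S hs
      simp only [Real.norm_eq_abs] at hmvt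
      calc |deriv f s - deriv f θ₀| ≤ M * (1 / q) * |s - θ₀| := by
            simpa [one_div] using hmvt
        _ ≤ M * (1 / q) * (1 / q) :=
          mul_le_mul_of_nonneg_left (hdist s hs) (by positivity)
    -- fundamental theorem of calculus
    have hftc : ∫ x in a..b, deriv f x = f b - f a :=
      intervalIntegral.integral_deriv_eq_sub (fun x _ => hf1 x)
        (hcont.intervalIntegrable a b)
    have hint1 : IntervalIntegrable (deriv f) MeasureTheory.volume a b :=
      hcont.intervalIntegrable a b
    have hint2 : IntervalIntegrable (fun _ : ℝ => deriv f θ₀) MeasureTheory.volume a b :=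
      intervalIntegrable_const
    have hIeq : ∫ x in a..b, (deriv f x - deriv f θ₀)
        = (f b - f a) - (b - a) * deriv f θ₀ := by
      rw [intervalIntegral.integral_sub hint1 hint2, hftc, intervalIntegral.integral_const,
        smul_eq_mul]
    have hIbound : |∫ x in a..b, (deriv f x - deriv f θ₀)| ≤ M * (1 / q) * (1 / q) * (1 / q) := by
      have := intervalIntegral.norm_integral_le_of_norm_le_const
        (C := M * (1 / q) * (1 / q)) (f := fun x => deriv f x - deriv f θ₀)
        (a := a) (b := b) (fun x hx => by
          have hx' : x ∈ Set.Icc a b := Set.Ioc_subset_Icc_self (Set.uIoc_of_le haleb ▸ hx)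
          simpa [Real.norm_eq_abs] using d1bound x hx')
      rw [Real.norm_eq_abs] at this
      calc |∫ x in a..b, (deriv f x - deriv f θ₀)| ≤ M * (1/q) * (1/q) * |b - a| := this
        _ = M * (1/q) * (1/q) * (1/q) := by rw [hba, abs_of_pos (by positivity)]
    have hgridk := hgrid k
    -- combine
    have hmain : |deriv f θ₀ - 1| * (1 / q) ≤ (C + M) / q ^ 3 := by
      have heq : (deriv f θ₀ - 1) * (1 / q)
          = (f b - f a - 1 / q) - ∫ x in a..b, (deriv f x - deriv f θ₀) := by
        rw [hIeq, hba]; ring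
      rw [← abs_of_pos (show (0:ℝ) < 1/q by positivity), ← abs_mul, heq]
      calc |(f b - f a - 1 / q) - ∫ x in a..b, (deriv f x - deriv f θ₀)|
          ≤ |f b - f a - 1 / q| + |∫ x in a..b, (deriv f x - deriv f θ₀)| := abs_sub _ _
        _ ≤ C / q ^ 3 + M * (1/q) * (1/q) * (1/q) := add_le_add hgridk hIbound
        _ = (C + M) / q ^ 3 := by field_simp
    have hq3 : (0:ℝ) < (q:ℝ) ^ 3 := by positivity
    have h3 : |deriv f θ₀ - 1| * (q:ℝ) ^ 2 ≤ C + M := by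
      have h4 := mul_le_mul_of_nonneg_right hmain (le_of_lt hq3)
      rw [div_mul_cancel₀ _ (ne_of_gt hq3)] at h4
      calc |deriv f θ₀ - 1| * (q:ℝ) ^ 2 = |deriv f θ₀ - 1| * (1 / q) * (q:ℝ) ^ 3 := by
            field_simp
        _ ≤ C + M := h4
    rw [le_div_iff₀ (show (0:ℝ) < (q:ℝ)^2 by positivity)]
    exact h3
  -- extrema of the periodic derivative
  obtain ⟨x₀, hx₀mem, hx₀max⟩ := isCompact_Icc.exists_isMaxOn
    (Set.nonempty_Icc.mpr (zero_le_one (α := ℝ))) hcont.continuousOn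
  obtain ⟨x₁, hx₁mem, hx₁min⟩ := isCompact_Icc.exists_isMinOn
    (Set.nonempty_Icc.mpr (zero_le_one (α := ℝ))) hcont.continuousOn
  have hmax : ∀ y : ℝ, deriv f y ≤ deriv f x₀ := by
    intro y
    obtain ⟨z, hz, hyz⟩ := hpd.exists_mem_Ico one_pos y 0
    rw [hyz]
    exact hx₀max (Set.Ico_subset_Icc_self (by simpa using hz))
  have hmin : ∀ y : ℝ, deriv f x₁ ≤ deriv f y := by
    intro y
    obtain ⟨z, hz, hyz⟩ := hpd.exists_mem_Ico one_pos y 0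
    rw [hyz]
    exact hx₁min (Set.Ico_subset_Icc_self (by simpa using hz))
  have hcrit₀ : deriv (deriv f) x₀ = 0 :=
    IsLocalMax.deriv_eq_zero (Filter.Eventually.of_forall hmax)
  have hcrit₁ : deriv (deriv f) x₁ = 0 :=
    IsLocalMin.deriv_eq_zero (Filter.Eventually.of_forall hmin)
  have h₀ := key x₀ hcrit₀
  have h₁ := key x₁ hcrit₁
  intro θ
  rw [abs_le] at h₀ h₁ ⊢
  exact ⟨by linarith [hmin θ, h₁.1], by linarith [hmax θ, h₀.2]⟩
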